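/- Let M be an MRTA instance whose cost function c is injective on E, and let (W, a) be the output of the SSI auction on M. Then Σ_{k=1}^{|T|} c(w_k) ≤ C(𝒫) for every plan 𝒫 of M; in particular, Σ_{k=1}^{|T|} c(w_k) ≤ C(MinSum(M)). -/

import Mathlib

open Finset

/-- The (traversal) cost of a route given as a list of vertices: the sum of the
costs of consecutive pairs. -/
def pathCost {α : Type*} (c : α → α → ℝ) (l : List α) : ℝ :=
  ((l.zip l.tail).map fun p => c p.1 p.2).sum

/-- The set of tasks assigned in the bid rounds with (0-based) index `< k`. -/
def auctionAssigned {V : Type*} [DecidableEq V] {n : ℕ} (w : Fin n → V × V) (k : ℕ) :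
    Finset V :=
  (Finset.univ.filter fun i : Fin n => (i : ℕ) < k).image fun i => (w i).2

/-- `w` is the output of the SSI auction for the instance `(R, T, c)`. -/
def IsAuction {V : Type*} [DecidableEq V] (R T : Finset V) (c : V → V → ℝ) {n : ℕ}
    (w : Fin n → V × V) : Prop :=
  ∀ k : Fin n,
    (w k).1 ∈ R ∪ auctionAssigned w (k : ℕ) ∧
    (w k).2 ∈ T \ auctionAssigned w (k : ℕ) ∧
    ∀ s ∈ R ∪ auctionAssigned w (k : ℕ), ∀ t ∈ T \ auctionAssigned w (k : ℕ),
      (s, t) ≠ w k → c (w k).1 (w k).2 < c s t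

/-- `c` is injective on the edge set of the complete graph. -/
def InjOnEdges {V : Type*} (c : V → V → ℝ) : Prop :=
  ∀ x y x' y' : V, x ≠ y → x' ≠ y' → c x y = c x' y' →
    (x = x' ∧ y = y') ∨ (x = y' ∧ y = x')

/-- `P` is a plan: for each robot `r ∈ R`, `P r` is a robot-route starting at `r`
whose remaining vertices are tasks, the routes have no repeated vertices, and the
vertex sets of the routes partition `R ∪ T`. -/
def IsPlan {V : Type*} (R T : Finset V) (P : V → List V) : Prop :=
  (∀ r ∈ R, ∃ rest : List V, P r = r :: rest ∧ ∀ v ∈ rest, v ∈ T) ∧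
  (∀ r ∈ R, (P r).Nodup) ∧
  (∀ v : V, ∃! r : V, r ∈ R ∧ v ∈ P r)

def prevIn {α : Type*} [DecidableEq α] : List α → α → α
  | a :: b :: l, v => if v = b then a else prevIn (b :: l) v
  | _, v => v

lemma reachHead {V : Type*} [DecidableEq V] (p : V → V) :
    ∀ (rest : List V) (a : V), (a :: rest).Nodup →
      (∀ v ∈ rest, p v = prevIn (a :: rest) v) →
      ∀ v ∈ a :: rest, ∃ j, p^[j] v = a := by
  intro rest
  induction rest with
  | nil =>
    intro a _ _ v hv
    simp at hv
    exact ⟨0, hv⟩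
  | cons b m IH =>
    intro a hnd hp v hv
    have hnd' : (b :: m).Nodup := hnd.of_cons
    have hpb : p b = a := by
      rw [hp b List.mem_cons_self]; simp [prevIn]
    have hpm : ∀ u ∈ m, p u = prevIn (b :: m) u := by
      intro u hu
      have hub : u ≠ b := by
        intro h; exact (List.nodup_cons.mp hnd').1 (h ▸ hu)
      rw [hp u (List.mem_cons_of_mem _ hu)]
      simp [prevIn, hub]
    rcases List.mem_cons.mp hv with rfl | hv'
    · exact ⟨0, rfl⟩
    rcases List.mem_cons.mp hv' with rfl | hvm
    · exact ⟨1, by simpa using hpb⟩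
    · obtain ⟨j, hj⟩ := IH b hnd' hpm v (List.mem_cons_of_mem _ hvm)
      exact ⟨j + 1, by rw [Function.iterate_succ_apply', hj, hpb]⟩

lemma pathCost_eq {V : Type*} [DecidableEq V] (c : V → V → ℝ) (p : V → V) :
    ∀ (rest : List V) (a : V), (a :: rest).Nodup →
      (∀ v ∈ rest, p v = prevIn (a :: rest) v) →
      pathCost c (a :: rest) = (rest.map fun v => c (p v) v).sum := by
  intro rest
  induction rest with
  | nil => intro a _ _; simp [pathCost]
  | cons b m IH =>
    intro a hnd hp
    have hnd' : (b :: m).Nodup := hnd.of_cons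
    have hpb : p b = a := by
      rw [hp b List.mem_cons_self]; simp [prevIn]
    have hpm : ∀ u ∈ m, p u = prevIn (b :: m) u := by
      intro u hu
      have hub : u ≠ b := by
        intro h; exact (List.nodup_cons.mp hnd').1 (h ▸ hu)
      rw [hp u (List.mem_cons_of_mem _ hu)]
      simp [prevIn, hub]
    have hstep : pathCost c (a :: b :: m) = c a b + pathCost c (b :: m) := by
      simp [pathCost]
    rw [hstep, IH b hnd' hpm]
    simp [hpb]

lemma mem_auctionAssigned {V : Type*} [DecidableEq V] {n : ℕ} {w : Fin n → V × V} {k : ℕ}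
    {v : V} : v ∈ auctionAssigned w k ↔ ∃ i : Fin n, (i : ℕ) < k ∧ (w i).2 = v := by
  simp [auctionAssigned, Finset.mem_image, Finset.mem_filter]

lemma auction_le {V : Type*} [Fintype V] [DecidableEq V] (R T : Finset V)
    (hdisj : Disjoint R T) (hunion : R ∪ T = Finset.univ)
    (c : V → V → ℝ) (hsymm : ∀ x y, c x y = c y x)
    (w : Fin T.card → V × V) (hw : IsAuction R T c w) :
    ∀ m k : ℕ, k + m = T.card → ∀ p : V → V,
      (∀ v : V, ∃ j, p^[j] v ∈ R) →
      (∀ j : Fin T.card, (j : ℕ) < k → p (w j).2 = (w j).1) →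
      ∑ j : Fin T.card, c (w j).1 (w j).2 ≤ ∑ t ∈ T, c (p t) t := by
  classical
  intro m
  induction m with
  | zero =>
    intro k hk p _ hagree
    have hk' : k = T.card := by omega
    subst hk'
    -- j ↦ (w j).2 is a bijection onto T
    have hne : ∀ i j : Fin T.card, (i : ℕ) < (j : ℕ) → (w i).2 ≠ (w j).2 := by
      intro i j hij heq
      have h1 : (w i).2 ∈ auctionAssigned w (j : ℕ) :=
        mem_auctionAssigned.mpr ⟨i, hij, rfl⟩
      have h2 := (hw j).2.1
      rw [Finset.mem_sdiff] at h2
      exact h2.2 (heq ▸ h1)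
    have hinjW : Function.Injective (fun j : Fin T.card => (w j).2) := by
      intro i j h
      rcases lt_trichotomy (i : ℕ) (j : ℕ) with h' | h' | h'
      · exact absurd h (hne i j h')
      · exact Fin.ext h'
      · exact absurd h.symm (hne j i h')
    have himg : (Finset.univ.image fun j : Fin T.card => (w j).2) = T := by
      apply Finset.eq_of_subset_of_card_le
      · intro v hv
        obtain ⟨j, _, rfl⟩ := Finset.mem_image.mp hv
        have := (hw j).2.1
        rw [Finset.mem_sdiff] at this
        exact this.1
      · rw [Finset.card_image_of_injective _ hinjW, Finset.card_univ, Fintype.card_fin]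
    have hsi := Finset.sum_image (s := Finset.univ) (f := fun v => c (p v) v)
      (g := fun j : Fin T.card => (w j).2) (fun i _ j _ h => hinjW h)
    rw [himg] at hsi
    have hsi' : ∑ x ∈ T, c (p x) x = ∑ x : Fin T.card, c (p (w x).2) (w x).2 := hsi
    rw [hsi']
    apply le_of_eq
    refine Finset.sum_congr rfl fun j _ => ?_
    rw [hagree j j.isLt]
  | succ m IH =>
    intro k hk p hGood hagree
    have hkn : k < T.card := by omega
    set K : Fin T.card := ⟨k, hkn⟩ with hKdef
    have hKk : (K : ℕ) = k := rfl
    obtain ⟨hs, ht, hmin⟩ := hw K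
    rw [hKk] at hs ht hmin
    -- the chain from t
    set x : ℕ → V := fun i => p^[i] (w K).2 with hxdef
    have hex : ∃ i, x i ∈ R ∪ auctionAssigned w k := by
      obtain ⟨j, hj⟩ := hGood (w K).2
      exact ⟨j, Finset.mem_union_left _ hj⟩
    set M : ℕ := Nat.find hex with hMdef
    have hM : x M ∈ R ∪ auctionAssigned w k := Nat.find_spec hex
    have hMmin : ∀ i, i < M → x i ∉ R ∪ auctionAssigned w k := fun i hi => Nat.find_min hex hi
    have hnotRA : ∀ v ∈ T \ auctionAssigned w k, v ∉ R ∪ auctionAssigned w k := by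
      intro v hv hvRA
      rw [Finset.mem_sdiff] at hv
      rcases Finset.mem_union.mp hvRA with h | h
      · exact (Finset.disjoint_left.mp hdisj h) hv.1
      · exact hv.2 h
    have hx0 : x 0 = (w K).2 := rfl
    have hM0 : 0 < M := by
      rcases Nat.eq_zero_or_pos M with h | h
      · exact absurd (h ▸ hM) (hx0 ▸ hnotRA _ ht)
      · exact h
    have hxT : ∀ i, i < M → x i ∈ T \ auctionAssigned w k := by
      intro i hi
      have h1 := hMmin i hi
      have h2 : x i ∈ R ∪ T := hunion ▸ Finset.mem_univ _
      rw [Finset.mem_sdiff]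
      rcases Finset.mem_union.mp h2 with h | h
      · exact absurd (Finset.mem_union_left _ h) h1
      · exact ⟨h, fun hA => h1 (Finset.mem_union_right _ hA)⟩
    have hxsucc : ∀ i, x (i + 1) = p (x i) := fun i => Function.iterate_succ_apply' p i _
    have hinjx : ∀ i j, i < j → j ≤ M → x i ≠ x j := by
      intro i j hij hjM heq
      have h1 : x ((M - j) + i) = x M := by
        show p^[(M - j) + i] (w K).2 = p^[M] (w K).2
        rw [Function.iterate_add_apply]
        show p^[M - j] (x i) = p^[M] (w K).2
        rw [heq]
        show p^[M - j] (p^[j] (w K).2) = p^[M] (w K).2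
        rw [← Function.iterate_add_apply, Nat.sub_add_cancel hjM]
      exact hMmin _ (by omega) (h1 ▸ hM)
    -- the modified forest p'
    set p' : V → V := fun v =>
      if hv : ∃ i, i < M ∧ x i = v then
        (if Nat.find hv = 0 then (w K).1 else x (Nat.find hv - 1))
      else p v with hp'def
    have hp'x : ∀ i, i < M → p' (x i) = if i = 0 then (w K).1 else x (i - 1) := by
      intro i hi
      have hv : ∃ i', i' < M ∧ x i' = x i := ⟨i, hi, rfl⟩
      have hfind : Nat.find hv = i := by
        have h1 := Nat.find_spec hv
        have h2 : Nat.find hv ≤ i := Nat.find_le ⟨hi, rfl⟩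
        rcases lt_or_eq_of_le h2 with h | h
        · exact absurd h1.2 (hinjx _ i h hi.le)
        · exact h
      show dite _ _ _ = _
      rw [dif_pos hv, hfind]
    have hp'not : ∀ v, (¬ ∃ i, i < M ∧ x i = v) → p' v = p v := by
      intro v hv
      show dite _ _ _ = _
      rw [dif_neg hv]
    -- p' agrees with w up to round k
    have hagree' : ∀ j : Fin T.card, (j : ℕ) < k + 1 → p' (w j).2 = (w j).1 := by
      intro j hj
      rcases Nat.lt_succ_iff_lt_or_eq.mp hj with hj | hj
      · have hnx : ¬ ∃ i, i < M ∧ x i = (w j).2 := by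
          rintro ⟨i, hiM, hxi⟩
          have h1 := hxT i hiM
          rw [Finset.mem_sdiff] at h1
          exact h1.2 (hxi ▸ mem_auctionAssigned.mpr ⟨j, hj, rfl⟩)
        rw [hp'not _ hnx]
        exact hagree j hj
      · have : j = K := Fin.ext hj
        subst this
        have := hp'x 0 hM0
        rw [hx0] at this
        simpa using this
    -- p' is a rooted forest
    have hA : ∀ j' : ℕ, j' ≤ k → ∀ v ∈ R ∪ auctionAssigned w j', ∃ l, p'^[l] v ∈ R := by
      intro j'
      induction j' using Nat.strong_induction_on with
      | _ j' IH2 =>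
        intro hj' v hv
        rcases Finset.mem_union.mp hv with h | h
        · exact ⟨0, h⟩
        · obtain ⟨i, hi, hiv⟩ := mem_auctionAssigned.mp h
          have hpv : p' v = (w i).1 := by
            rw [← hiv]; exact hagree' i (by omega)
          obtain ⟨l, hl⟩ := IH2 (i : ℕ) hi (by omega) ((w i).1) (hw i).1
          exact ⟨l + 1, by rw [Function.iterate_succ_apply, hpv]; exact hl⟩
    have hsR : ∃ l, p'^[l] (w K).1 ∈ R := hA k le_rfl _ hs
    have hB : ∀ i, i < M → ∃ l, p'^[l] (x i) ∈ R := by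
      intro i
      induction i with
      | zero =>
        intro h0
        have hpx : p' (x 0) = (w K).1 := by simpa using hp'x 0 h0
        obtain ⟨l, hl⟩ := hsR
        exact ⟨l + 1, by rw [Function.iterate_succ_apply, hpx]; exact hl⟩
      | succ i IH3 =>
        intro hi
        have hpx : p' (x (i + 1)) = x i := by simpa using hp'x (i + 1) hi
        obtain ⟨l, hl⟩ := IH3 (by omega)
        exact ⟨l + 1, by rw [Function.iterate_succ_apply, hpx]; exact hl⟩
    have hGood' : ∀ v, ∃ l, p'^[l] v ∈ R := by
      intro v
      obtain ⟨j, hj⟩ := hGood v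
      induction j generalizing v with
      | zero => exact ⟨0, hj⟩
      | succ j IH4 =>
        by_cases hv : ∃ i, i < M ∧ x i = v
        · obtain ⟨i, hi, rfl⟩ := hv
          exact hB i hi
        · by_cases hvR : v ∈ R
          · exact ⟨0, hvR⟩
          · have hj' : p^[j] (p v) ∈ R := by
              rw [← Function.iterate_succ_apply]; exact hj
            obtain ⟨l, hl⟩ := IH4 (p v) hj'
            exact ⟨l + 1, by rw [Function.iterate_succ_apply, hp'not v hv]; exact hl⟩
    -- cost comparison
    have hstep : c (w K).1 (w K).2 ≤ c (x M) (x (M - 1)) := by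
      have hxm1 : x (M - 1) ∈ T \ auctionAssigned w k := hxT (M - 1) (by omega)
      by_cases he : (x M, x (M - 1)) = w K
      · have h1 : x M = (w K).1 := congrArg Prod.fst he
        have h2 : x (M - 1) = (w K).2 := congrArg Prod.snd he
        rw [h1, h2]
      · exact (hmin (x M) hM (x (M - 1)) hxm1 he).le
    set S : Finset V := (Finset.range M).image x with hSdef
    have hSsub : S ⊆ T := by
      intro v hv
      obtain ⟨i, hi, rfl⟩ := Finset.mem_image.mp hv
      exact (Finset.mem_sdiff.mp (hxT i (Finset.mem_range.mp hi))).1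
    have hsum_S : ∀ q : V → V, ∑ v ∈ S, c (q v) v = ∑ i ∈ Finset.range M, c (q (x i)) (x i) := by
      intro q
      apply Finset.sum_image
      intro i hi j hj h
      rcases lt_trichotomy i j with h' | h' | h'
      · exact absurd h (hinjx i j h' (Finset.mem_range.mp hj).le)
      · exact h'
      · exact absurd h.symm (hinjx j i h' (Finset.mem_range.mp hi).le)
    have key : ∑ t' ∈ T, c (p' t') t' ≤ ∑ t' ∈ T, c (p t') t' := by
      rw [← Finset.sum_sdiff hSsub (f := fun v => c (p' v) v),
          ← Finset.sum_sdiff hSsub (f := fun v => c (p v) v)]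
      apply add_le_add
      · apply le_of_eq
        refine Finset.sum_congr rfl fun v hv => ?_
        rw [Finset.mem_sdiff] at hv
        have : ¬ ∃ i, i < M ∧ x i = v := by
          rintro ⟨i, hi, rfl⟩
          exact hv.2 (Finset.mem_image.mpr ⟨i, Finset.mem_range.mpr hi, rfl⟩)
        rw [hp'not v this]
      · rw [hsum_S p', hsum_S p]
        have hMsplit : M = (M - 1) + 1 := by omega
        have lhs_eq : ∑ i ∈ Finset.range M, c (p' (x i)) (x i)
            = (∑ i ∈ Finset.range (M - 1), c (x i) (x (i + 1))) + c (w K).1 (w K).2 := by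
          rw [hMsplit, Finset.sum_range_succ']
          congr 1
          · refine Finset.sum_congr rfl fun i hi => ?_
            have hi' : i + 1 < M := by have := Finset.mem_range.mp hi; omega
            rw [hp'x (i + 1) hi']
            simp
          · rw [hp'x 0 hM0]
            simp [hx0]
        have rhs_eq : ∑ i ∈ Finset.range M, c (p (x i)) (x i)
            = (∑ i ∈ Finset.range (M - 1), c (x (i + 1)) (x i)) + c (x M) (x (M - 1)) := by
          rw [hMsplit, Finset.sum_range_succ]
          congr 1
          · refine Finset.sum_congr rfl fun i hi => ?_
            rw [← hxsucc i]
          · rw [← hxsucc (M - 1), ← hMsplit]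
        rw [lhs_eq, rhs_eq]
        apply add_le_add
        · apply le_of_eq
          exact Finset.sum_congr rfl fun i _ => hsymm _ _
        · exact hstep
    exact le_trans (IH (k + 1) (by omega) p' hGood' hagree') key

theorem statement3 {V : Type*} [Fintype V] [DecidableEq V] (R T : Finset V)
    (hdisj : Disjoint R T) (hunion : R ∪ T = Finset.univ) (hcard : 3 ≤ Fintype.card V)
    (c : V → V → ℝ) (hsymm : ∀ x y, c x y = c y x) (hnonneg : ∀ x y, 0 ≤ c x y)
    (hinj : InjOnEdges c)
    (w : Fin T.card → V × V) (hw : IsAuction R T c w) :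
    -- the total cost of the winning edges is at most the cost of every plan;
    -- in particular it is at most `C(MinSum(M))`
    ∀ P : V → List V, IsPlan R T P →
      ∑ k : Fin T.card, c (w k).1 (w k).2 ≤ ∑ r ∈ R, pathCost c (P r) := by
  classical
  intro P hP
  obtain ⟨h1, h2, h3⟩ := hP
  set ρ : V → V := fun v => (h3 v).choose with hρdef
  have hρ1 : ∀ v, ρ v ∈ R ∧ v ∈ P (ρ v) := fun v => (h3 v).choose_spec.1
  have hρ2 : ∀ v r, r ∈ R → v ∈ P r → r = ρ v := fun v r hr hv =>
    (h3 v).choose_spec.2 r ⟨hr, hv⟩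
  set p : V → V := fun v => prevIn (P (ρ v)) v with hpdef
  have hpr : ∀ r ∈ R, ∀ v ∈ P r, p v = prevIn (P r) v := by
    intro r hr v hv
    show prevIn (P (ρ v)) v = prevIn (P r) v
    rw [← hρ2 v r hr hv]
  have hGood : ∀ v, ∃ j, p^[j] v ∈ R := by
    intro v
    obtain ⟨hr, hv⟩ := hρ1 v
    obtain ⟨rest, hPr, hrest⟩ := h1 (ρ v) hr
    have hnd : (ρ v :: rest).Nodup := hPr ▸ h2 (ρ v) hr
    have hp' : ∀ u ∈ rest, p u = prevIn (ρ v :: rest) u := by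
      intro u hu
      rw [← hPr]
      exact hpr (ρ v) hr u (by rw [hPr]; exact List.mem_cons_of_mem _ hu)
    obtain ⟨j, hj⟩ := reachHead p rest (ρ v) hnd hp' v (hPr ▸ hv)
    exact ⟨j, hj ▸ hr⟩
  have hterm : ∀ r ∈ R, pathCost c (P r) = ∑ v ∈ (P r).tail.toFinset, c (p v) v := by
    intro r hr
    obtain ⟨rest, hPr, hrest⟩ := h1 r hr
    have hnd : (r :: rest).Nodup := hPr ▸ h2 r hr
    have hp' : ∀ u ∈ rest, p u = prevIn (r :: rest) u := by
      intro u hu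
      rw [← hPr]
      exact hpr r hr u (by rw [hPr]; exact List.mem_cons_of_mem _ hu)
    rw [hPr, pathCost_eq c p rest r hnd hp']
    rw [List.tail_cons]
    exact (List.sum_toFinset _ (List.nodup_cons.mp hnd).2).symm
  have hbi : R.biUnion (fun r => (P r).tail.toFinset) = T := by
    ext v
    simp only [Finset.mem_biUnion, List.mem_toFinset]
    constructor
    · rintro ⟨r, hr, hv⟩
      obtain ⟨rest, hPr, hrest⟩ := h1 r hr
      rw [hPr, List.tail_cons] at hv
      exact hrest v hv
    · intro hv
      obtain ⟨hr, hvP⟩ := hρ1 v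
      refine ⟨ρ v, hr, ?_⟩
      obtain ⟨rest, hPr, hrest⟩ := h1 (ρ v) hr
      rw [hPr, List.tail_cons]
      rw [hPr] at hvP
      rcases List.mem_cons.mp hvP with h | h
      · exact absurd (h ▸ hr) (fun hc => (Finset.disjoint_left.mp hdisj hc) hv)
      · exact h
  have hpd : Set.PairwiseDisjoint (↑R) (fun r => (P r).tail.toFinset) := by
    intro r1 hr1 r2 hr2 hne
    simp only [Function.onFun]
    rw [Finset.disjoint_left]
    intro v hv1 hv2
    rw [List.mem_toFinset] at hv1 hv2
    have e1 := hρ2 v r1 hr1 (List.mem_of_mem_tail hv1)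
    have e2 := hρ2 v r2 hr2 (List.mem_of_mem_tail hv2)
    exact hne (e1.trans e2.symm)
  have hcost : ∑ r ∈ R, pathCost c (P r) = ∑ t ∈ T, c (p t) t := by
    rw [Finset.sum_congr rfl hterm, ← Finset.sum_biUnion hpd, hbi]
  rw [hcost]
  exact auction_le R T hdisj hunion c hsymm w hw T.card 0 (by omega) p hGood
    (fun j hj => absurd hj (Nat.not_lt_zero _))
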